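/- arXiv:2605.01695 — 2 statements merged into one kernel-verified Lean document; each statement's English description precedes it below -/
import Mathlib

section
/- Let δ ∈ (0,1), η > 0, m > 0, and suppose the phases θ_i satisfy |θ_i'(t)| ≤ W·e^{-t/m} + M·(1 − e^{-t/m}) for constants W, M ≥ 0. If m·W·(1 − e^{-η}) + M·m·(η − 1 + e^{-η}) < (1 − δ)·R(0), then R(t) > δ·R(0) for all t ∈ [0, ηm], where R(t) = (1/N)·Σ_j (1 + cos θ_j(t)). -/
theorem stmt_17 (N : ℕ) (hN : 0 < N) (δ η m W M : ℝ)
    (hδ : δ ∈ Set.Ioo (0 : ℝ) 1) (hη : 0 < η) (hm : 0 < m)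
    (hW : 0 ≤ W) (hM : 0 ≤ M)
    (θ : Fin N → ℝ → ℝ) (hθ : ∀ i, ContDiff ℝ 1 (θ i))
    (hbound : ∀ i t, 0 ≤ t →
      |deriv (θ i) t| ≤ W * Real.exp (-t / m) + M * (1 - Real.exp (-t / m)))
    (R : ℝ → ℝ) (hR : ∀ t, R t = (1 / (N : ℝ)) * ∑ j, (1 + Real.cos (θ j t)))
    (hsmall : m * W * (1 - Real.exp (-η)) + M * m * (η - 1 + Real.exp (-η))
      < (1 - δ) * R 0) :
    ∀ t ∈ Set.Icc (0 : ℝ) (η * m), R t > δ * R 0 := by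
  obtain ⟨hδ0, hδ1⟩ := hδ
  set g : ℝ → ℝ := fun s => W * Real.exp (-s / m) + M * (1 - Real.exp (-s / m)) with hgdef
  have hgcont : Continuous g := by
    apply Continuous.add
    · exact continuous_const.mul ((continuous_id.neg.div_const m).rexp)
    · exact continuous_const.mul (continuous_const.sub ((continuous_id.neg.div_const m).rexp))
  have hgnonneg : ∀ s, 0 ≤ s → 0 ≤ g s := by
    intro s hs
    have h1 : Real.exp (-s / m) ≤ 1 := by
      apply Real.exp_le_one_iff.mpr
      apply div_nonpos_of_nonpos_of_nonneg (by linarith) hm.le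
    have h2 : 0 < Real.exp (-s / m) := Real.exp_pos _
    have := mul_nonneg hW h2.le
    have := mul_nonneg hM (by linarith : (0:ℝ) ≤ 1 - Real.exp (-s / m))
    simp only [hgdef]; linarith
  -- antiderivative of g
  set G : ℝ → ℝ := fun s => (M - W) * m * Real.exp (-s / m) + M * s with hGdef
  have hG : ∀ s : ℝ, HasDerivAt G (g s) s := by
    intro s
    have h1 : HasDerivAt (fun s : ℝ => -s / m) (-1 / m) s := by
      simpa using ((hasDerivAt_id s).neg.div_const m)
    have h2 : HasDerivAt (fun s : ℝ => Real.exp (-s / m)) (Real.exp (-s / m) * (-1 / m)) s :=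
      (Real.hasDerivAt_exp _).comp s h1
    have h3 : HasDerivAt G ((M - W) * m * (Real.exp (-s / m) * (-1 / m)) + M * 1) s :=
      (h2.const_mul ((M - W) * m)).add ((hasDerivAt_id s).const_mul M)
    convert h3 using 1
    field_simp [hgdef]
    simp only [hgdef]; ring_nf
  have hGint : ∀ a b : ℝ, (∫ s in a..b, g s) = G b - G a := fun a b =>
    intervalIntegral.integral_eq_sub_of_hasDerivAt (fun s _ => hG s)
      (hgcont.intervalIntegrable a b)
  -- R as explicit function
  have hRfun : R = fun t => (1 / (N : ℝ)) * ∑ j, (1 + Real.cos (θ j t)) := funext hR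
  have hθd : ∀ i t, HasDerivAt (θ i) (deriv (θ i) t) t := fun i t =>
    (((hθ i).differentiable one_ne_zero) t).hasDerivAt
  have hRderiv : ∀ t, HasDerivAt R
      ((1 / (N : ℝ)) * ∑ j, -Real.sin (θ j t) * deriv (θ j) t) t := by
    intro t
    rw [hRfun]
    apply HasDerivAt.const_mul
    apply HasDerivAt.fun_sum
    intro j _
    have h1 : HasDerivAt (fun t => Real.cos (θ j t))
        (-Real.sin (θ j t) * deriv (θ j) t) t :=
      (Real.hasDerivAt_cos (θ j t)).comp t (hθd j t)
    simpa using h1.const_add 1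
  have hRderivcont : Continuous (deriv R) := by
    have : deriv R = fun t => (1 / (N : ℝ)) * ∑ j, -Real.sin (θ j t) * deriv (θ j) t :=
      funext fun t => (hRderiv t).deriv
    rw [this]
    apply Continuous.mul continuous_const
    apply continuous_finset_sum
    intro j _
    exact ((Real.continuous_sin.comp (hθ j).continuous).neg).mul
      ((hθ j).continuous_deriv le_rfl)
  have hRbnd : ∀ t, 0 ≤ t → |deriv R t| ≤ g t := by
    intro t ht
    rw [(hRderiv t).deriv]
    calc |(1 / (N : ℝ)) * ∑ j, -Real.sin (θ j t) * deriv (θ j) t|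
        ≤ (1 / (N : ℝ)) * ∑ j, |(-Real.sin (θ j t)) * deriv (θ j) t| := by
          rw [abs_mul, abs_of_nonneg (by positivity : (0:ℝ) ≤ 1 / (N:ℝ))]
          exact mul_le_mul_of_nonneg_left (Finset.abs_sum_le_sum_abs _ _) (by positivity)
      _ ≤ (1 / (N : ℝ)) * ∑ _j : Fin N, g t := by
          apply mul_le_mul_of_nonneg_left _ (by positivity)
          apply Finset.sum_le_sum
          intro j _
          rw [abs_mul]
          calc |(-Real.sin (θ j t))| * |deriv (θ j) t|
              ≤ 1 * |deriv (θ j) t| := by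
                apply mul_le_mul_of_nonneg_right _ (abs_nonneg _)
                rw [abs_neg]; exact Real.abs_sin_le_one _
            _ = |deriv (θ j) t| := one_mul _
            _ ≤ g t := hbound j t ht
      _ = g t := by
          rw [Finset.sum_const, Finset.card_fin, nsmul_eq_mul]
          field_simp
  intro t ht
  obtain ⟨ht0, htm⟩ := ht
  -- FTC
  have hftc : R t - R 0 = ∫ s in (0:ℝ)..t, deriv R s :=
    (intervalIntegral.integral_eq_sub_of_hasDerivAt
      (fun s _ => ((hRderiv s).differentiableAt).hasDerivAt)
      (hRderivcont.intervalIntegrable 0 t)).symm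
  have habs : |R t - R 0| ≤ ∫ s in (0:ℝ)..t, g s := by
    rw [hftc]
    calc |∫ s in (0:ℝ)..t, deriv R s| ≤ ∫ s in (0:ℝ)..t, |deriv R s| :=
          intervalIntegral.abs_integral_le_integral_abs ht0
      _ ≤ ∫ s in (0:ℝ)..t, g s := by
          apply intervalIntegral.integral_mono_on ht0
            (hRderivcont.abs.intervalIntegrable 0 t) (hgcont.intervalIntegrable 0 t)
          intro s hs
          exact hRbnd s hs.1
  have hmono : (∫ s in (0:ℝ)..t, g s) ≤ ∫ s in (0:ℝ)..(η * m), g s := by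
    rw [hGint, hGint]
    have : (0:ℝ) ≤ ∫ s in t..(η * m), g s :=
      intervalIntegral.integral_nonneg htm (fun s hs => hgnonneg s (le_trans ht0 hs.1))
    rw [hGint] at this
    linarith
  have hval : (∫ s in (0:ℝ)..(η * m), g s)
      = m * W * (1 - Real.exp (-η)) + M * m * (η - 1 + Real.exp (-η)) := by
    rw [hGint]
    have : -(η * m) / m = -η := by field_simp
    simp only [hGdef, this, neg_zero, zero_div, Real.exp_zero]
    ring
  have hkey : |R t - R 0| < (1 - δ) * R 0 := by
    rw [hval] at hmono
    linarith
  have := abs_sub_abs_le_abs_sub (R 0) (R t)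
  have h1 : R 0 - R t ≤ |R t - R 0| := by
    rw [abs_sub_comm]; exact le_abs_self _
  linarith
end

section
/- Consider the vector field X on ℝ^N given by X_i(θ) = ν_i − κ·R(θ)·sin θ_i, where R(θ) = (1/N)Σ_j(1 + cos θ_j). Then div X(θ) = κ·( N·R(θ)·(1 − R(θ)) + (1/N)·Σ_i sin² θ_i ) ≥ κ·N·R(θ)·(1 − R(θ)). -/
open Real Finset

lemma aux_deriv (n ν κ C t : ℝ) :
    HasDerivAt (fun x => ν - κ * (n * ((1 + Real.cos x) + C)) * Real.sin x)
      (κ * (n * Real.sin t ^ 2 - n * ((1 + Real.cos t) + C) * Real.cos t)) t := by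
  have h1 : HasDerivAt (fun x => n * ((1 + Real.cos x) + C)) (n * (-Real.sin t)) t :=
    (((Real.hasDerivAt_cos t).const_add 1).add_const C).const_mul n
  have h2 := ((h1.mul (Real.hasDerivAt_sin t)).const_mul κ).const_sub ν
  have e : (fun x => ν - κ * (n * ((1 + Real.cos x) + C)) * Real.sin x)
      = (fun x => ν - κ * ((fun x => n * ((1 + Real.cos x) + C)) * Real.sin) x) := by
    funext x; simp only [Pi.mul_apply]; ring
  rw [e]
  exact h2.congr_deriv (by ring)

theorem stmt_18 (N : ℕ) (hN : 0 < N) (ν : Fin N → ℝ) (κ : ℝ) (hκ : 0 ≤ κ)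
    (R : (Fin N → ℝ) → ℝ)
    (hR : ∀ θ : Fin N → ℝ, R θ = (1 / (N : ℝ)) * ∑ j, (1 + Real.cos (θ j)))
    (X : Fin N → (Fin N → ℝ) → ℝ)
    (hX : ∀ (i : Fin N) (θ : Fin N → ℝ), X i θ = ν i - κ * R θ * Real.sin (θ i))
    (θ : Fin N → ℝ) :
    (∑ i, deriv (fun x => X i (Function.update θ i x)) (θ i))
        = κ * ((N : ℝ) * R θ * (1 - R θ) + (1 / (N : ℝ)) * ∑ i, Real.sin (θ i) ^ 2) ∧
    (∑ i, deriv (fun x => X i (Function.update θ i x)) (θ i))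
        ≥ κ * (N : ℝ) * R θ * (1 - R θ) := by
  have hNpos : (0:ℝ) < N := Nat.cast_pos.mpr hN
  have key : ∀ i : Fin N, deriv (fun x => X i (Function.update θ i x)) (θ i)
      = κ * ((1 / (N : ℝ)) * Real.sin (θ i) ^ 2 - R θ * Real.cos (θ i)) := by
    intro i
    set C : ℝ := ∑ j ∈ (Finset.univ \ {i} : Finset (Fin N)), (1 + Real.cos (θ j)) with hC
    have hRdec : ∀ x : ℝ, R (Function.update θ i x)
        = (1 / (N : ℝ)) * ((1 + Real.cos x) + C) := by
      intro x
      rw [hR]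
      congr 1
      have hfun : (fun j => 1 + Real.cos (Function.update θ i x j))
          = Function.update (fun j => 1 + Real.cos (θ j)) i (1 + Real.cos x) := by
        funext j
        by_cases hj : j = i
        · subst hj; simp
        · simp [Function.update_of_ne hj]
      rw [hfun, Finset.sum_update_of_mem (Finset.mem_univ i)]
    have hfeq : (fun x => X i (Function.update θ i x))
        = fun x => ν i - κ * ((1 / (N:ℝ)) * ((1 + Real.cos x) + C)) * Real.sin x := by
      funext x
      rw [hX, hRdec, Function.update_self]
    rw [hfeq, (aux_deriv (1 / (N:ℝ)) (ν i) κ C (θ i)).deriv]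
    have hRθ : R θ = (1 / (N:ℝ)) * ((1 + Real.cos (θ i)) + C) := by
      rw [hR]
      congr 1
      rw [hC, Finset.sum_eq_add_sum_sdiff_singleton_of_mem (Finset.mem_univ i)]
    rw [hRθ]
  have hsumcos : ∑ i, Real.cos (θ i) = (N : ℝ) * R θ - N := by
    rw [hR]
    field_simp
    rw [Finset.sum_add_distrib]
    simp [Finset.card_univ]
  have heq : (∑ i, deriv (fun x => X i (Function.update θ i x)) (θ i))
      = κ * ((N : ℝ) * R θ * (1 - R θ) + (1 / (N : ℝ)) * ∑ i, Real.sin (θ i) ^ 2) := by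
    simp only [key]
    rw [← Finset.mul_sum, Finset.sum_sub_distrib, ← Finset.mul_sum, ← Finset.mul_sum, hsumcos]
    ring
  refine ⟨heq, ?_⟩
  rw [heq]
  have h1 : 0 ≤ (1 / (N : ℝ)) * ∑ i, Real.sin (θ i) ^ 2 :=
    mul_nonneg (by positivity) (Finset.sum_nonneg fun i _ => sq_nonneg _)
  nlinarith [mul_nonneg hκ h1]
end
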